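/- For every n ≥ 0 there exists an indecomposable representation M of Q with dimension vector (n, n+1, n, n) together with a short exact sequence of representations 0 → P₄ⁿ⁺¹ → P₂ ⊕ P₁ⁿ → M → 0. (These are the modules on one of the special tubes of the quiver Q.) -/

import Mathlib

variable (k : Type) [Field k]

/-- A finite-dimensional representation of the quiver `Q` with vertices `1,2,3,4`
and arrows `a : 1 → 2`, `b : 1 → 3`, `c : 2 → 4`, `d : 3 → 4`. -/
structure QRep where
  V1 : Type
  V2 : Type
  V3 : Type
  V4 : Type
  [acg1 : AddCommGroup V1]
  [acg2 : AddCommGroup V2]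
  [acg3 : AddCommGroup V3]
  [acg4 : AddCommGroup V4]
  [mod1 : Module k V1]
  [mod2 : Module k V2]
  [mod3 : Module k V3]
  [mod4 : Module k V4]
  [fin1 : FiniteDimensional k V1]
  [fin2 : FiniteDimensional k V2]
  [fin3 : FiniteDimensional k V3]
  [fin4 : FiniteDimensional k V4]
  ma : V1 →ₗ[k] V2
  mb : V1 →ₗ[k] V3
  mc : V2 →ₗ[k] V4
  md : V3 →ₗ[k] V4

attribute [instance] QRep.acg1 QRep.acg2 QRep.acg3 QRep.acg4
  QRep.mod1 QRep.mod2 QRep.mod3 QRep.mod4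
  QRep.fin1 QRep.fin2 QRep.fin3 QRep.fin4

variable {k}

/-- Morphisms of representations of `Q`. -/
@[ext]
structure QHom (M N : QRep k) where
  f1 : M.V1 →ₗ[k] N.V1
  f2 : M.V2 →ₗ[k] N.V2
  f3 : M.V3 →ₗ[k] N.V3
  f4 : M.V4 →ₗ[k] N.V4
  comm_a : f2 ∘ₗ M.ma = N.ma ∘ₗ f1
  comm_b : f3 ∘ₗ M.mb = N.mb ∘ₗ f1
  comm_c : f4 ∘ₗ M.mc = N.mc ∘ₗ f2
  comm_d : f4 ∘ₗ M.md = N.md ∘ₗ f3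

/-- Two representations are isomorphic iff there is a morphism all of whose
components are bijective. -/
def QIso (M N : QRep k) : Prop :=
  ∃ f : QHom M N, Function.Bijective f.f1 ∧ Function.Bijective f.f2 ∧
    Function.Bijective f.f3 ∧ Function.Bijective f.f4

/-- The zero representation(s). -/
def QRep.IsZeroRep (M : QRep k) : Prop :=
  Subsingleton M.V1 ∧ Subsingleton M.V2 ∧ Subsingleton M.V3 ∧ Subsingleton M.V4

/-- Vertexwise direct sum of representations. -/
def QRep.dsum (M N : QRep k) : QRep k where
  V1 := M.V1 × N.V1
  V2 := M.V2 × N.V2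
  V3 := M.V3 × N.V3
  V4 := M.V4 × N.V4
  ma := M.ma.prodMap N.ma
  mb := M.mb.prodMap N.mb
  mc := M.mc.prodMap N.mc
  md := M.md.prodMap N.md

/-- Direct sum of `n` copies of a representation. -/
def QRep.dpow (M : QRep k) (n : ℕ) : QRep k where
  V1 := Fin n → M.V1
  V2 := Fin n → M.V2
  V3 := Fin n → M.V3
  V4 := Fin n → M.V4
  ma := M.ma.compLeft (Fin n)
  mb := M.mb.compLeft (Fin n)
  mc := M.mc.compLeft (Fin n)
  md := M.md.compLeft (Fin n)

/-- A representation is indecomposable if it is nonzero and not isomorphic to a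
direct sum of two nonzero representations. -/
def QRep.Indecomposable (M : QRep k) : Prop :=
  ¬ M.IsZeroRep ∧ ∀ A B : QRep k, QIso M (A.dsum B) → A.IsZeroRep ∨ B.IsZeroRep

/-- `0 → A → B → C → 0` is short exact (vertexwise). -/
def QShortExact {A B C : QRep k} (f : QHom A B) (g : QHom B C) : Prop :=
  (Function.Injective f.f1 ∧ Function.Injective f.f2 ∧
    Function.Injective f.f3 ∧ Function.Injective f.f4) ∧
  (Function.Surjective g.f1 ∧ Function.Surjective g.f2 ∧
    Function.Surjective g.f3 ∧ Function.Surjective g.f4) ∧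
  (LinearMap.range f.f1 = LinearMap.ker g.f1 ∧ LinearMap.range f.f2 = LinearMap.ker g.f2 ∧
    LinearMap.range f.f3 = LinearMap.ker g.f3 ∧ LinearMap.range f.f4 = LinearMap.ker g.f4)

variable (k)

/-- The `n×n` Jordan block with eigenvalue `lam`, as a linear endomorphism of `kⁿ`. -/
def jordan (n : ℕ) (lam : k) : (Fin n → k) →ₗ[k] (Fin n → k) :=
  Matrix.mulVecLin (Matrix.of fun i j : Fin n =>
    if i = j then lam else if (i : ℕ) + 1 = (j : ℕ) then 1 else 0)

/-- The representation `M_n(λ) = (kⁿ,kⁿ,kⁿ,kⁿ; id,id,id,J_n(λ))`. -/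
def Mlam (n : ℕ) (lam : k) : QRep k where
  V1 := Fin n → k
  V2 := Fin n → k
  V3 := Fin n → k
  V4 := Fin n → k
  ma := LinearMap.id
  mb := LinearMap.id
  mc := LinearMap.id
  md := jordan k n lam

/-- The indecomposable projective `P₁ = (k,k,k,k²)`. -/
def P1 : QRep k where
  V1 := k
  V2 := k
  V3 := k
  V4 := k × k
  ma := LinearMap.id
  mb := LinearMap.id
  mc := LinearMap.inl k k k
  md := LinearMap.inr k k k

/-- The indecomposable projective `P₂ = (0,k,0,k)`. -/
def P2 : QRep k where
  V1 := Fin 0 → k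
  V2 := k
  V3 := Fin 0 → k
  V4 := k
  ma := 0
  mb := 0
  mc := LinearMap.id
  md := 0

/-- The indecomposable projective `P₃ = (0,0,k,k)`. -/
def P3 : QRep k where
  V1 := Fin 0 → k
  V2 := Fin 0 → k
  V3 := k
  V4 := k
  ma := 0
  mb := 0
  mc := 0
  md := LinearMap.id

/-- The indecomposable projective `P₄ = (0,0,0,k)`. -/
def P4 : QRep k where
  V1 := Fin 0 → k
  V2 := Fin 0 → k
  V3 := Fin 0 → k
  V4 := k
  ma := 0
  mb := 0
  mc := 0
  md := 0

theorem jordan_apply (n : ℕ) (x : Fin n → k) (i : Fin n) :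
    jordan k n 0 x i = if h : (i:ℕ)+1 < n then x ⟨(i:ℕ)+1, h⟩ else 0 := by
  simp only [jordan, Matrix.mulVecLin_apply, Matrix.mulVec, dotProduct, Matrix.of_apply]
  split
  · next h =>
    rw [Finset.sum_eq_single (⟨(i:ℕ)+1, h⟩ : Fin n)]
    · have : i ≠ (⟨(i:ℕ)+1, h⟩ : Fin n) := by simp [Fin.ext_iff]
      simp [this]
    · intro j _ hj
      have h1 : ¬ ((i:ℕ)+1 = (j:ℕ)) := fun hh => hj (by simp [Fin.ext_iff, hh.symm])
      rcases eq_or_ne i j with h'|h' <;> simp [h', h1]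
    · simp
  · next h =>
    apply Finset.sum_eq_zero
    intro j _
    have h1 : ¬ ((i:ℕ)+1 = (j:ℕ)) := fun hh => h (hh ▸ j.isLt)
    rcases eq_or_ne i j with h'|h' <;> simp [h', h1]
theorem jordan_pow_apply (n p : ℕ) (x : Fin n → k) (i : Fin n) :
    ((jordan k n 0)^p) x i = if h : (i:ℕ)+p < n then x ⟨(i:ℕ)+p, h⟩ else 0 := by
  induction p generalizing i with
  | zero => simp
  | succ p ih =>
    have : ((jordan k n 0)^(p+1)) x = (jordan k n 0) (((jordan k n 0)^p) x) := by
      rw [pow_succ']; rfl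
    rw [this, jordan_apply]
    split
    · next h =>
      rw [ih]
      have : (i:ℕ) + 1 + p = (i:ℕ) + (p+1) := by omega
      simp only [this]
    · next h =>
      rw [dif_neg (by omega)]

theorem jordan_pow_n (n : ℕ) (x : Fin n → k) : ((jordan k n 0)^n) x = 0 := by
  funext i
  rw [jordan_pow_apply, dif_neg (by omega)]
  rfl

theorem ker_jordan (n : ℕ) (hn : 0 < n) (x : Fin n → k) (hx : jordan k n 0 x = 0) :
    x = x ⟨0, hn⟩ • (fun j : Fin n => if (j:ℕ) = 0 then (1:k) else 0) := by
  funext i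
  rcases Nat.eq_zero_or_pos (i:ℕ) with h0 | h0
  · have : i = ⟨0, hn⟩ := by simp [Fin.ext_iff, h0]
    simp [this]
  · have hi1 : (i:ℕ) - 1 < n := by omega
    have := congrFun hx ⟨(i:ℕ)-1, hi1⟩
    rw [jordan_apply] at this
    simp only [Fin.val_mk] at this
    rw [dif_pos (by omega)] at this
    simp only [Pi.zero_apply] at this
    have hne : ¬ ((i:ℕ) = 0) := by omega
    have hi : (⟨(i:ℕ)-1+1, by omega⟩ : Fin n) = i := by simp [Fin.ext_iff]; omega
    rw [hi] at this
    simp [hne, this]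
theorem comm_pow (n p : ℕ) (f : (Fin n → k) →ₗ[k] (Fin n → k))
    (hf : ∀ x, f (jordan k n 0 x) = jordan k n 0 (f x)) (x : Fin n → k) :
    f (((jordan k n 0)^p) x) = ((jordan k n 0)^p) (f x) := by
  induction p generalizing x with
  | zero => simp
  | succ p ih =>
    have h1 : ∀ y : Fin n → k, ((jordan k n 0)^(p+1)) y = ((jordan k n 0)^p) (jordan k n 0 y) := by
      intro y; rw [pow_succ]; rfl
    rw [h1, h1, ih, hf]

/-- key: an idempotent commuting with the nilpotent Jordan block is 0 or id -/
theorem idem_comm_jordan (n : ℕ) (f : (Fin n → k) →ₗ[k] (Fin n → k))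
    (hidem : ∀ x, f (f x) = f x)
    (hf : ∀ x, f (jordan k n 0 x) = jordan k n 0 (f x)) :
    f = 0 ∨ f = LinearMap.id := by
  rcases Nat.eq_zero_or_pos n with hn | hn
  · left; ext x i; exact absurd i.isLt (by omega)
  by_cases h0 : f = 0
  · left; exact h0
  right
  by_cases hid : f = LinearMap.id
  · exact hid
  exfalso
  -- e0 vector
  set e0 : Fin n → k := fun j : Fin n => if (j:ℕ) = 0 then (1:k) else 0 with he0
  have he0ne : e0 ≠ 0 := by
    intro h
    have := congrFun h ⟨0, hn⟩
    simp [he0] at this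
  -- a "last nonzero power" extractor
  have key : ∀ x : Fin n → k, x ≠ 0 → ∃ c : k, c ≠ 0 ∧ ∃ p : ℕ,
      ((jordan k n 0)^p) x = c • e0 := by
    intro x hx
    have hex : ∃ q, ((jordan k n 0)^q) x = 0 := ⟨n, jordan_pow_n k n x⟩
    classical
    set q := Nat.find hex with hq
    have hq0 : 0 < q := by
      rcases Nat.eq_zero_or_pos q with h | h
      · exfalso; apply hx
        have := Nat.find_spec hex
        rw [← hq, h] at this; simpa using this
      · exact h
    have hlast : ((jordan k n 0)^(q-1)) x ≠ 0 := Nat.find_min hex (by omega)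
    have hker : jordan k n 0 (((jordan k n 0)^(q-1)) x) = 0 := by
      have : ((jordan k n 0)^q) x = 0 := Nat.find_spec hex
      have hq1 : q = (q-1) + 1 := by omega
      rw [hq1, pow_succ'] at this
      exact this
    set y := ((jordan k n 0)^(q-1)) x with hy
    have := ker_jordan k n hn y hker
    refine ⟨y ⟨0, hn⟩, ?_, q-1, this⟩
    intro hc
    apply hlast
    rw [this, hc, zero_smul]
  -- f fixes e0 (from f ≠ 0) and kills e0 (from f ≠ id): contradiction
  have hfix : f e0 = e0 := by
    have : ∃ y, f y ≠ 0 := by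
      by_contra h
      push_neg at h
      exact h0 (LinearMap.ext fun y => by simp [h y])
    obtain ⟨y, hy⟩ := this
    obtain ⟨c, hc, p, hp⟩ := key (f y) hy
    have h1 : f (c • e0) = c • e0 := by
      rw [← hp, comm_pow k n p f hf, hidem]
    rw [map_smul] at h1
    have := smul_right_injective (Fin n → k) hc h1
    exact this
  have hkill : f e0 = 0 := by
    have : ∃ z, z - f z ≠ 0 := by
      by_contra h
      push_neg at h
      exact hid (LinearMap.ext fun z => by
        have := sub_eq_zero.mp (h z)
        simp [this.symm])
    obtain ⟨z, hz⟩ := this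
    obtain ⟨c, hc, p, hp⟩ := key (z - f z) hz
    have hker2 : f (z - f z) = 0 := by rw [map_sub, hidem, sub_self]
    have h1 : f (c • e0) = 0 := by
      rw [← hp, comm_pow k n p f hf, hker2, map_zero]
    rw [map_smul] at h1
    rcases smul_eq_zero.mp h1 with h | h
    · exact absurd h hc
    · exact h
  rw [hfix] at hkill
  exact he0ne hkill
/-- The vector `e_{n-1}` (zero when `n = 0`). -/
def vvec (n : ℕ) : Fin n → k := fun i => if (i:ℕ) = n - 1 then (1:k) else 0

/-- The indecomposable regular representation with dimension vector `(n, n+1, n, n)`. -/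
def MM (n : ℕ) : QRep k where
  V1 := Fin n → k
  V2 := (Fin n → k) × k
  V3 := Fin n → k
  V4 := Fin n → k
  ma := LinearMap.inl k (Fin n → k) k
  mb := LinearMap.id
  mc := (jordan k n 0).coprod (LinearMap.toSpanSingleton k (Fin n → k) (vvec k n))
  md := LinearMap.id

/-- The map `f₄` of the short exact sequence. -/
def fses4 (n : ℕ) : (Fin (n+1) → k) →ₗ[k] k × (Fin n → k × k) :=
  (LinearMap.proj (Fin.last n)).prod
    (LinearMap.pi fun i =>
      ((LinearMap.proj (i.castSucc : Fin (n+1))).prod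
        (-(((LinearMap.proj (i : Fin n)) ∘ₗ
            ((jordan k n 0) ∘ₗ LinearMap.funLeft k k Fin.castSucc +
             (LinearMap.toSpanSingleton k (Fin n → k) (vvec k n)) ∘ₗ
               (LinearMap.proj (Fin.last n))))))))

theorem fses4_apply (n : ℕ) (c : Fin (n+1) → k) :
    fses4 k n c = (c (Fin.last n), fun i =>
      (c i.castSucc,
       -(jordan k n 0 (fun j => c j.castSucc) i + c (Fin.last n) • vvec k n i))) := by
  simp [fses4, LinearMap.funLeft, smul_eq_mul]
  funext i
  refine Prod.ext ?_ ?_ <;> simp [Function.comp] <;> ring_nf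
  rfl

/-- The map `g₄` of the short exact sequence. -/
def gses4 (n : ℕ) : (k × (Fin n → k × k)) →ₗ[k] (Fin n → k) :=
  (LinearMap.toSpanSingleton k (Fin n → k) (vvec k n)).coprod
    ((LinearMap.snd k k k).compLeft (Fin n) +
      (jordan k n 0) ∘ₗ (LinearMap.fst k k k).compLeft (Fin n))

theorem gses4_apply (n : ℕ) (t : k) (z : Fin n → k × k) :
    gses4 k n (t, z) = t • vvec k n + ((fun i => (z i).2) + jordan k n 0 (fun i => (z i).1)) := by
  simp [gses4, LinearMap.compLeft]
  rfl
/-- The injection `P₄ⁿ⁺¹ → P₂ ⊕ P₁ⁿ`. -/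
def fses (n : ℕ) : QHom ((P4 k).dpow (n+1)) ((P2 k).dsum ((P1 k).dpow n)) where
  f1 := 0
  f2 := 0
  f3 := 0
  f4 := fses4 k n
  comm_a := by
    apply LinearMap.ext; intro x
    simp [QRep.dpow, QRep.dsum, P4, P2, P1, LinearMap.compLeft]
    rfl
  comm_b := by
    apply LinearMap.ext; intro x
    simp [QRep.dpow, QRep.dsum, P4, P2, P1, LinearMap.compLeft]
    rfl
  comm_c := by
    apply LinearMap.ext; intro x
    have h : (((P4 k).dpow (n+1)).mc) x = 0 := by
      rfl
    simp only [LinearMap.comp_apply, LinearMap.zero_apply, h, map_zero]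
    exact (congrArg (fses4 k n) h).trans (map_zero _)
  comm_d := by
    apply LinearMap.ext; intro x
    have h : (((P4 k).dpow (n+1)).md) x = 0 := by
      rfl
    simp only [LinearMap.comp_apply, LinearMap.zero_apply, h, map_zero]
    exact (congrArg (fses4 k n) h).trans (map_zero _)

/-- The projection `P₂ ⊕ P₁ⁿ → M`. -/
def gses (n : ℕ) : QHom ((P2 k).dsum ((P1 k).dpow n)) (MM k n) where
  f1 := LinearMap.snd k (Fin 0 → k) (Fin n → k)
  f2 := (LinearEquiv.prodComm k k (Fin n → k)).toLinearMap
  f3 := LinearMap.snd k (Fin 0 → k) (Fin n → k)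
  f4 := gses4 k n
  comm_a := by
    apply LinearMap.ext; rintro ⟨u, x⟩
    simp [QRep.dpow, QRep.dsum, P2, P1, MM, LinearMap.compLeft]
    rfl
  comm_b := by
    apply LinearMap.ext; rintro ⟨u, x⟩
    simp [QRep.dpow, QRep.dsum, P2, P1, MM, LinearMap.compLeft]
    rfl
  comm_c := by
    apply LinearMap.ext; rintro ⟨t, x⟩
    change k at t
    change Fin n → k at x
    show gses4 k n (t, fun i => ((P1 k).mc (x i))) = (MM k n).mc (x, t)
    erw [gses4_apply]
    simp only [P1, LinearMap.coe_inl]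
    simp [MM, LinearMap.coprod_apply, LinearMap.toSpanSingleton_apply]
    show t • vvec k n + ((0 : Fin n → k) + jordan k n 0 x) = jordan k n 0 x + t • vvec k n
    rw [zero_add, add_comm]
  comm_d := by
    apply LinearMap.ext; rintro ⟨u, x⟩
    change Fin n → k at x
    show gses4 k n (0, fun i => ((P1 k).md (x i))) = (MM k n).md (x)
    erw [gses4_apply]
    simp only [P1, LinearMap.coe_inr]
    have h0 : (jordan k n 0) (fun i => (((0:k), x i) : k × k).1) = 0 := by
      have : (fun i => (((0:k), x i) : k × k).1) = (0 : Fin n → k) := rfl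
      rw [this, map_zero]
    simp [MM, h0]
    show x + jordan k n 0 (0 : Fin n → k) = x
    rw [map_zero, add_zero]
theorem g4_f4 (n : ℕ) (c : Fin (n+1) → k) : gses4 k n (fses4 k n c) = 0 := by
  rw [fses4_apply, gses4_apply]
  have h2 : (fun i : Fin n => ((c i.castSucc,
      -(jordan k n 0 (fun j => c j.castSucc) i + c (Fin.last n) • vvec k n i)) : k × k).1)
      = fun j => c j.castSucc := rfl
  have h1 : (fun i : Fin n => ((c i.castSucc,
      -(jordan k n 0 (fun j => c j.castSucc) i + c (Fin.last n) • vvec k n i)) : k × k).2)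
      = -(jordan k n 0 (fun j => c j.castSucc) + c (Fin.last n) • vvec k n) := by
    funext i; simp
  rw [h1, h2]
  abel

theorem f4_ker (n : ℕ) (t : k) (z : Fin n → k × k) (hz : gses4 k n (t, z) = 0) :
    fses4 k n (Fin.snoc (fun i => (z i).1) t) = (t, z) := by
  rw [gses4_apply] at hz
  rw [fses4_apply]
  have hlast : (Fin.snoc (fun i => (z i).1) t : Fin (n+1) → k) (Fin.last n) = t :=
    Fin.snoc_last _ _
  have hcast : (fun j : Fin n => (Fin.snoc (fun i => (z i).1) t : Fin (n+1) → k) j.castSucc)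
      = fun i => (z i).1 := by
    funext i; exact Fin.snoc_castSucc _ _ _
  rw [hlast]
  refine Prod.ext rfl ?_
  funext i
  dsimp only
  rw [hcast]
  refine Prod.ext ?_ ?_
  · simp
  show -(jordan k n 0 (fun i => (z i).1) i + t * vvec k n i) = (z i).2
  have := congrFun hz i
  simp only [Pi.add_apply, Pi.smul_apply, smul_eq_mul, Pi.zero_apply] at this
  linear_combination -this

theorem f4_inj (n : ℕ) (c d : Fin (n+1) → k) (h : fses4 k n c = fses4 k n d) : c = d := by
  rw [fses4_apply, fses4_apply] at h
  funext j
  refine Fin.lastCases ?_ ?_ j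
  · exact congrArg Prod.fst h
  · intro i
    have := congrFun (congrArg Prod.snd h) i
    exact congrArg Prod.fst this

theorem ses_exact (n : ℕ) : QShortExact (fses k n) (gses k n) := by
  refine ⟨⟨?_, ?_, ?_, ?_⟩, ⟨?_, ?_, ?_, ?_⟩, ⟨?_, ?_, ?_, ?_⟩⟩
  · intro a b _; exact Subsingleton.elim (α := Fin (n+1) → (Fin 0 → k)) a b
  · intro a b _; exact Subsingleton.elim (α := Fin (n+1) → (Fin 0 → k)) a b
  · intro a b _; exact Subsingleton.elim (α := Fin (n+1) → (Fin 0 → k)) a b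
  · intro c d h
    exact f4_inj k n c d h
  · rintro x; exact ⟨(0, x), rfl⟩
  · rintro ⟨y, t⟩; exact ⟨(t, y), rfl⟩
  · rintro x; exact ⟨(0, x), rfl⟩
  · intro x
    change Fin n → k at x
    refine ⟨((0:k), fun i => ((0:k), x i)), ?_⟩
    show gses4 k n _ = x
    erw [gses4_apply]
    have h1 : (fun i : Fin n => (((0:k), x i) : k × k).1) = (0 : Fin n → k) := rfl
    have h2 : (fun i : Fin n => (((0:k), x i) : k × k).2) = x := rfl
    rw [h1, h2, map_zero, zero_smul, zero_add, add_zero]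
  · apply le_antisymm
    · rintro y ⟨x, rfl⟩
      exact LinearMap.mem_ker.mpr rfl
    · rintro ⟨u, x⟩ hx
      have hx' : x = 0 := hx
      refine ⟨0, ?_⟩
      rw [map_zero]
      exact Prod.ext (Subsingleton.elim (α := Fin 0 → k) _ _) hx'.symm
  · apply le_antisymm
    · rintro y ⟨x, rfl⟩
      exact LinearMap.mem_ker.mpr rfl
    · rintro ⟨t, x⟩ hx
      have hx' : ((x, t) : (Fin n → k) × k) = 0 := hx
      refine ⟨0, ?_⟩
      rw [map_zero]
      exact Prod.ext (congrArg Prod.snd hx').symm (congrArg Prod.fst hx').symm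
  · apply le_antisymm
    · rintro y ⟨x, rfl⟩
      exact LinearMap.mem_ker.mpr rfl
    · rintro ⟨u, x⟩ hx
      have hx' : x = 0 := hx
      refine ⟨0, ?_⟩
      rw [map_zero]
      exact Prod.ext (Subsingleton.elim (α := Fin 0 → k) _ _) hx'.symm
  · apply le_antisymm
    · rintro y ⟨c, rfl⟩
      exact LinearMap.mem_ker.mpr (g4_f4 k n c)
    · rintro ⟨t, z⟩ hz
      exact ⟨Fin.snoc (fun i => (z i).1) t, f4_ker k n t z hz⟩
section helpers

variable {V W V' W' : Type} [AddCommGroup V] [AddCommGroup W] [AddCommGroup V'] [AddCommGroup W']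
  [Module k V] [Module k W] [Module k V'] [Module k W']

theorem ofBij_apply_symm (f : V →ₗ[k] V') (hf : Function.Bijective f) (z : V') :
    f ((LinearEquiv.ofBijective f hf).symm z) = z :=
  (LinearEquiv.ofBijective f hf).apply_symm_apply z

theorem symm_comm_map (m : V →ₗ[k] W) (m' : V' →ₗ[k] W') (f : V →ₗ[k] V') (g : W →ₗ[k] W')
    (hf : Function.Bijective f) (hg : Function.Bijective g)
    (hcomm : ∀ x, g (m x) = m' (f x)) (z : V') :
    (LinearEquiv.ofBijective g hg).symm (m' z) = m ((LinearEquiv.ofBijective f hf).symm z) := by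
  apply hg.injective
  have h1 : g ((LinearEquiv.ofBijective g hg).symm (m' z)) = m' z :=
    ofBij_apply_symm k g hg (m' z)
  rw [h1, hcomm]
  congr 1
  exact (ofBij_apply_symm k f hf z).symm

theorem conj_comm (m : V →ₗ[k] W) (m' : V' →ₗ[k] W') (f : V →ₗ[k] V') (g : W →ₗ[k] W')
    (hf : Function.Bijective f) (hg : Function.Bijective g)
    (q : V' →ₗ[k] V') (r : W' →ₗ[k] W')
    (hcomm : ∀ x, g (m x) = m' (f x)) (hqr : ∀ z, r (m' z) = m' (q z)) (x : V) :
    (LinearEquiv.ofBijective g hg).symm (r (g (m x))) =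
      m ((LinearEquiv.ofBijective f hf).symm (q (f x))) := by
  rw [hcomm, hqr]
  exact symm_comm_map k m m' f g hf hg hcomm (q (f x))

theorem conj_idem (f : V →ₗ[k] V') (hf : Function.Bijective f) (q : V' →ₗ[k] V')
    (hq : ∀ z, q (q z) = q z) (x : V) :
    (LinearEquiv.ofBijective f hf).symm
        (q (f ((LinearEquiv.ofBijective f hf).symm (q (f x))))) =
      (LinearEquiv.ofBijective f hf).symm (q (f x)) := by
  rw [ofBij_apply_symm k f hf (q (f x)), hq]

end helpers
theorem mc_inl (n : ℕ) (x : Fin n → k) :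
    (MM k n).mc ((x, 0) : (Fin n → k) × k) = jordan k n 0 x := by
  simp [MM]
  exact (LinearMap.coprod_apply _ _ _).trans (by simp)

theorem mc_apply (n : ℕ) (y : Fin n → k) (t : k) :
    (MM k n).mc ((y, t) : (Fin n → k) × k) = jordan k n 0 y + t • vvec k n := by
  simp [MM, LinearMap.toSpanSingleton_apply]
  exact (LinearMap.coprod_apply _ _ _).trans (by simp [LinearMap.toSpanSingleton_apply])

theorem vvec_last (n : ℕ) (hn : 0 < n) : vvec k n ⟨n-1, by omega⟩ = 1 := by
  simp [vvec]

theorem jordan_last (n : ℕ) (hn : 0 < n) (y : Fin n → k) :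
    jordan k n 0 y ⟨n-1, by omega⟩ = 0 := by
  rw [jordan_apply]
  exact dif_neg (by simp; omega)

theorem zero_side {V V' W' : Type} [AddCommGroup V] [AddCommGroup V'] [AddCommGroup W']
    [Module k V] [Module k V'] [Module k W'] (f : V →ₗ[k] V' × W') (hf : Function.Bijective f)
    (h : ∀ x, (LinearEquiv.ofBijective f hf).symm
      ((LinearMap.inl k V' W' ∘ₗ LinearMap.fst k V' W') (f x)) = 0) :
    ∀ a : V', a = 0 := by
  intro a
  obtain ⟨x, hx⟩ := hf.surjective ((a, 0) : V' × W')
  have h2 := h x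
  rw [hx] at h2
  have h3 := (LinearEquiv.symm_apply_eq _).mp h2
  rw [map_zero] at h3
  exact congrArg Prod.fst h3

theorem id_side {V V' W' : Type} [AddCommGroup V] [AddCommGroup V'] [AddCommGroup W']
    [Module k V] [Module k V'] [Module k W'] (f : V →ₗ[k] V' × W') (hf : Function.Bijective f)
    (h : ∀ x, (LinearEquiv.ofBijective f hf).symm
      ((LinearMap.inl k V' W' ∘ₗ LinearMap.fst k V' W') (f x)) = x) :
    ∀ b : W', b = 0 := by
  intro b
  obtain ⟨x, hx⟩ := hf.surjective ((0, b) : V' × W')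
  have h2 := h x
  rw [hx] at h2
  have h3 : ((LinearEquiv.ofBijective f hf).symm (0 : V' × W')) = x := h2
  rw [map_zero] at h3
  rw [← h3, map_zero] at hx
  exact ((congrArg Prod.snd hx) : (0 : V' × W').2 = b).symm

theorem MM_indec (n : ℕ) : (MM k n).Indecomposable := by
  constructor
  · rintro ⟨-, h2, -, -⟩
    have h := @Subsingleton.elim _ h2
      ((((0 : Fin n → k), (0:k)) : (Fin n → k) × k) : (MM k n).V2)
      ((((0 : Fin n → k), (1:k)) : (Fin n → k) × k) : (MM k n).V2)
    exact one_ne_zero ((congrArg Prod.snd h).symm : (1:k) = 0)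
  · rintro A B ⟨φ, hb1, hb2, hb3, hb4⟩
    classical
    set E1 := LinearEquiv.ofBijective φ.f1 hb1 with hE1
    set E2 := LinearEquiv.ofBijective φ.f2 hb2 with hE2
    set E3 := LinearEquiv.ofBijective φ.f3 hb3 with hE3
    set E4 := LinearEquiv.ofBijective φ.f4 hb4 with hE4
    set q1 : (A.dsum B).V1 →ₗ[k] (A.dsum B).V1 :=
      LinearMap.inl k A.V1 B.V1 ∘ₗ LinearMap.fst k A.V1 B.V1 with hq1
    set q2 : (A.dsum B).V2 →ₗ[k] (A.dsum B).V2 :=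
      LinearMap.inl k A.V2 B.V2 ∘ₗ LinearMap.fst k A.V2 B.V2 with hq2
    set q3 : (A.dsum B).V3 →ₗ[k] (A.dsum B).V3 :=
      LinearMap.inl k A.V3 B.V3 ∘ₗ LinearMap.fst k A.V3 B.V3 with hq3
    set q4 : (A.dsum B).V4 →ₗ[k] (A.dsum B).V4 :=
      LinearMap.inl k A.V4 B.V4 ∘ₗ LinearMap.fst k A.V4 B.V4 with hq4
    set e1 : (Fin n → k) →ₗ[k] (Fin n → k) :=
      E1.symm.toLinearMap ∘ₗ q1 ∘ₗ φ.f1 with he1def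
    set e2 : ((Fin n → k) × k) →ₗ[k] ((Fin n → k) × k) :=
      E2.symm.toLinearMap ∘ₗ q2 ∘ₗ φ.f2 with he2def
    set e3 : (Fin n → k) →ₗ[k] (Fin n → k) :=
      E3.symm.toLinearMap ∘ₗ q3 ∘ₗ φ.f3 with he3def
    set e4 : (Fin n → k) →ₗ[k] (Fin n → k) :=
      E4.symm.toLinearMap ∘ₗ q4 ∘ₗ φ.f4 with he4def
    have hqa : ∀ z, q2 ((A.dsum B).ma z) = (A.dsum B).ma (q1 z) := by
      rintro ⟨a, b⟩; simp [QRep.dsum, hq1, hq2]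
      exact Prod.ext rfl (map_zero B.ma).symm
    have hqb : ∀ z, q3 ((A.dsum B).mb z) = (A.dsum B).mb (q1 z) := by
      rintro ⟨a, b⟩; simp [QRep.dsum, hq1, hq3]
      exact Prod.ext rfl (map_zero B.mb).symm
    have hqc : ∀ z, q4 ((A.dsum B).mc z) = (A.dsum B).mc (q2 z) := by
      rintro ⟨a, b⟩; simp [QRep.dsum, hq2, hq4]
      exact Prod.ext rfl (map_zero B.mc).symm
    have hqd : ∀ z, q4 ((A.dsum B).md z) = (A.dsum B).md (q3 z) := by
      rintro ⟨a, b⟩; simp [QRep.dsum, hq3, hq4]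
      exact Prod.ext rfl (map_zero B.md).symm
    have hpa : ∀ x, φ.f2 ((MM k n).ma x) = (A.dsum B).ma (φ.f1 x) := fun x =>
      LinearMap.congr_fun φ.comm_a x
    have hpb : ∀ x, φ.f3 ((MM k n).mb x) = (A.dsum B).mb (φ.f1 x) := fun x =>
      LinearMap.congr_fun φ.comm_b x
    have hpc : ∀ x, φ.f4 ((MM k n).mc x) = (A.dsum B).mc (φ.f2 x) := fun x =>
      LinearMap.congr_fun φ.comm_c x
    have hpd : ∀ x, φ.f4 ((MM k n).md x) = (A.dsum B).md (φ.f3 x) := fun x =>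
      LinearMap.congr_fun φ.comm_d x
    have hca : ∀ x, e2 ((MM k n).ma x) = (MM k n).ma (e1 x) := fun x =>
      conj_comm k (MM k n).ma (A.dsum B).ma φ.f1 φ.f2 hb1 hb2 q1 q2 hpa hqa x
    have hcb : ∀ x, e3 x = e1 x := fun x =>
      conj_comm k (MM k n).mb (A.dsum B).mb φ.f1 φ.f3 hb1 hb3 q1 q3 hpb hqb x
    have hcc : ∀ y, e4 ((MM k n).mc y) = (MM k n).mc (e2 y) := fun y =>
      conj_comm k (MM k n).mc (A.dsum B).mc φ.f2 φ.f4 hb2 hb4 q2 q4 hpc hqc y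
    have hcd : ∀ x, e4 x = e3 x := fun x =>
      conj_comm k (MM k n).md (A.dsum B).md φ.f3 φ.f4 hb3 hb4 q3 q4 hpd hqd x
    have hqi : ∀ (VA VB : Type) (iA : AddCommGroup VA) (iB : AddCommGroup VB)
        (jA : Module k VA) (jB : Module k VB)
        (z : VA × VB), (LinearMap.inl k VA VB ∘ₗ LinearMap.fst k VA VB)
          ((LinearMap.inl k VA VB ∘ₗ LinearMap.fst k VA VB) z)
          = (LinearMap.inl k VA VB ∘ₗ LinearMap.fst k VA VB) z := by
      intro VA VB iA iB jA jB z
      rcases z with ⟨a, b⟩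
      simp
    have hi1 : ∀ x, e1 (e1 x) = e1 x := fun x =>
      conj_idem k φ.f1 hb1 q1 (hqi A.V1 B.V1 _ _ _ _) x
    have hi2 : ∀ x, e2 (e2 x) = e2 x := fun x =>
      conj_idem k φ.f2 hb2 q2 (hqi A.V2 B.V2 _ _ _ _) x
    have hmca : ∀ x, (MM k n).mc ((MM k n).ma x) = jordan k n 0 x := fun x => mc_inl k n x
    have hca' : ∀ x, e2 (LinearMap.inl k (Fin n → k) k x)
        = LinearMap.inl k (Fin n → k) k (e1 x) := fun x => hca x
    have hJ : ∀ x, e1 (jordan k n 0 x) = jordan k n 0 (e1 x) := by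
      intro x
      exact (hcb _).symm.trans ((hcd _).symm.trans (((congrArg e4 (hmca x)).symm.trans
        (hcc _)).trans ((congrArg (MM k n).mc (hca x)).trans (hmca _))))
    set p : (Fin n → k) × k := e2 (((0 : Fin n → k), (1:k)) : (Fin n → k) × k) with hp
    set y0 : Fin n → k := p.1 with hy0
    set s : k := p.2 with hs
    have hpy : p = ((y0, s) : (Fin n → k) × k) := rfl
    have hsplit : e2 ((y0, s) : (Fin n → k) × k)
        = (((e1 y0, 0) : (Fin n → k) × k)) + s • p := by
      have h1 : ((y0, s) : (Fin n → k) × k)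
          = LinearMap.inl k (Fin n → k) k y0 + s • (((0 : Fin n → k), (1:k)) : (Fin n → k) × k) := by
        simp [Prod.ext_iff]
      rw [h1, map_add, map_smul, hca', ← hp]
      rfl
    have hfix := hi2 (((0 : Fin n → k), (1:k)) : (Fin n → k) × k)
    rw [← hp, hpy, hsplit] at hfix
    have hy0eq : e1 y0 + s • y0 = y0 := by
      have h' := congrArg Prod.fst hfix
      simp only [Prod.fst_add, Prod.smul_fst] at h'
      rw [← hy0] at h'
      exact h'
    have hseq : s * s = s := by
      have h' := congrArg Prod.snd hfix
      simp only [Prod.snd_add, Prod.smul_snd, smul_eq_mul, zero_add] at h'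
      rw [← hs] at h'
      exact h'
    have hs01 : s = 0 ∨ s = 1 := by
      have h' : s * (s - 1) = 0 := by linear_combination hseq
      rcases mul_eq_zero.mp h' with h | h
      · exact Or.inl h
      · exact Or.inr (sub_eq_zero.mp h)
    have hv01 : (MM k n).mc (((0 : Fin n → k), (1:k)) : (Fin n → k) × k) = vvec k n := by
      rw [mc_apply]; simp; rfl
    rcases hs01 with hs0 | hs1
    · -- A is zero
      left
      have he1z : e1 = 0 := by
        rcases idem_comm_jordan k n e1 hi1 hJ with h | h
        · exact h
        · rcases Nat.eq_zero_or_pos n with hn | hn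
          · subst hn
            exact LinearMap.ext fun x => Subsingleton.elim _ _
          · exfalso
            have h1 := hcc (((0 : Fin n → k), (1:k)) : (Fin n → k) × k)
            rw [hv01, ← hp, hpy, mc_apply, hs0, zero_smul, add_zero] at h1
            have h2 : e4 (vvec k n) = vvec k n := by rw [hcd, hcb, h]; rfl
            rw [h2] at h1
            have h3 := congrFun h1 ⟨n-1, by omega⟩
            rw [vvec_last k n hn, jordan_last k n hn] at h3
            exact one_ne_zero h3
      have hy0z : y0 = 0 := by
        rw [he1z] at hy0eq
        rw [hs0] at hy0eq
        simpa using hy0eq.symm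
      have hp0 : p = 0 := by rw [hpy, hy0z, hs0]; rfl
      have he2z : ∀ z : (Fin n → k) × k, e2 z = 0 := by
        rintro ⟨y, t⟩
        have hz : ((y, t) : (Fin n → k) × k)
            = LinearMap.inl k (Fin n → k) k y + t • (((0 : Fin n → k), (1:k)) : (Fin n → k) × k) := by
          simp [Prod.ext_iff]
        rw [hz, map_add, map_smul, hca', he1z, ← hp, hp0, smul_zero, add_zero]
        simp
      have hz1 : ∀ x, e1 x = 0 := fun x => by rw [he1z]; rfl
      have hz3 : ∀ x, e3 x = 0 := fun x => by rw [hcb]; exact hz1 x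
      have hz4 : ∀ x, e4 x = 0 := fun x => by rw [hcd]; exact hz3 x
      have hA1 := zero_side k φ.f1 hb1 hz1
      have hA2 := zero_side k φ.f2 hb2 he2z
      have hA3 := zero_side k φ.f3 hb3 hz3
      have hA4 := zero_side k φ.f4 hb4 hz4
      exact ⟨⟨fun a b => by rw [hA1 a, hA1 b]⟩, ⟨fun a b => by rw [hA2 a, hA2 b]⟩,
        ⟨fun a b => by rw [hA3 a, hA3 b]⟩, ⟨fun a b => by rw [hA4 a, hA4 b]⟩⟩
    · -- B is zero
      right
      have he1i : e1 = LinearMap.id := by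
        rcases idem_comm_jordan k n e1 hi1 hJ with h | h
        · rcases Nat.eq_zero_or_pos n with hn | hn
          · subst hn
            exact LinearMap.ext fun x => Subsingleton.elim _ _
          · exfalso
            have h1 := hcc (((0 : Fin n → k), (1:k)) : (Fin n → k) × k)
            rw [hv01, ← hp, hpy, mc_apply, hs1, one_smul] at h1
            have h2 : e4 (vvec k n) = 0 := by rw [hcd, hcb, h]; rfl
            rw [h2] at h1
            have h3 := congrFun h1.symm ⟨n-1, by omega⟩
            rw [Pi.add_apply, vvec_last k n hn, jordan_last k n hn, zero_add] at h3
            exact one_ne_zero h3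
        · exact h
      have hy0z : y0 = 0 := by
        rw [he1i, hs1] at hy0eq
        simp only [LinearMap.id_apply, one_smul] at hy0eq
        exact add_eq_right.mp hy0eq
      have hp1 : p = (((0 : Fin n → k), (1:k)) : (Fin n → k) × k) := by
        rw [hpy, hy0z, hs1]
      have he2i : ∀ z : (Fin n → k) × k, e2 z = z := by
        rintro ⟨y, t⟩
        have hz : ((y, t) : (Fin n → k) × k)
            = LinearMap.inl k (Fin n → k) k y + t • (((0 : Fin n → k), (1:k)) : (Fin n → k) × k) := by
          simp [Prod.ext_iff]
        rw [hz, map_add, map_smul, hca', he1i, ← hp, hp1]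
        simp [Prod.ext_iff]
      have hid1 : ∀ x, e1 x = x := fun x => by rw [he1i]; rfl
      have hid3 : ∀ x, e3 x = x := fun x => by rw [hcb]; exact hid1 x
      have hid4 : ∀ x, e4 x = x := fun x => by rw [hcd]; exact hid3 x
      have hB1 := id_side k φ.f1 hb1 hid1
      have hB2 := id_side k φ.f2 hb2 he2i
      have hB3 := id_side k φ.f3 hb3 hid3
      have hB4 := id_side k φ.f4 hb4 hid4
      exact ⟨⟨fun a b => by rw [hB1 a, hB1 b]⟩, ⟨fun a b => by rw [hB2 a, hB2 b]⟩,
        ⟨fun a b => by rw [hB3 a, hB3 b]⟩, ⟨fun a b => by rw [hB4 a, hB4 b]⟩⟩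
/-- there is an indecomposable representation `M` of `Q` with the
given dimension vector together with a short exact sequence as indicated. -/
theorem stmt11 (k : Type) [Field k] (n : ℕ) :
    ∃ M : QRep k, M.Indecomposable ∧
      Module.finrank k M.V1 = n ∧ Module.finrank k M.V2 = n+1 ∧
      Module.finrank k M.V3 = n ∧ Module.finrank k M.V4 = n ∧
      ∃ (f : QHom ((P4 k).dpow (n+1)) ((P2 k).dsum ((P1 k).dpow n))) (g : QHom ((P2 k).dsum ((P1 k).dpow n)) M), QShortExact f g := by
  refine ⟨MM k n, MM_indec k n, ?_, ?_, ?_, ?_, fses k n, gses k n, ses_exact k n⟩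
  · show Module.finrank k (Fin n → k) = n
    exact Module.finrank_fin_fun k
  · show Module.finrank k ((Fin n → k) × k) = n + 1
    rw [Module.finrank_prod, Module.finrank_fin_fun, Module.finrank_self]
  · show Module.finrank k (Fin n → k) = n
    exact Module.finrank_fin_fun k
  · show Module.finrank k (Fin n → k) = n
    exact Module.finrank_fin_fun k
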